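/- Let A ∈ ℂ^{m×n}, b ∈ ℂ^m, μ > 0, and let (r̃, x̃) ∈ ℂ^m × ℂ^n satisfy A x̃ + r̃ = b. Then (r̃, x̃) is a solution of min over (x, r) of ‖x‖₁ + (1/(2μ))‖r‖₂² subject to A x + r = b if and only if, setting ỹ = r̃/μ and w = A*ỹ, one has ‖w‖_∞ ≤ 1 and Re(conj(wᵢ)·x̃ᵢ) = |x̃ᵢ| for every index i (i.e., A*ỹ belongs to the subdifferential of ‖·‖₁ at x̃). -/

import Mathlib

open Filter Topology Matrix Finset

noncomputable def l1 {ι : Type*} [Fintype ι] (v : ι → ℂ) : ℝ := ∑ i, ‖v i‖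

noncomputable def l2sq {ι : Type*} [Fintype ι] (v : ι → ℂ) : ℝ := ∑ i, (‖v i‖)^2

noncomputable def l2 {ι : Type*} [Fintype ι] (v : ι → ℂ) : ℝ := Real.sqrt (l2sq v)

noncomputable def linf {ι : Type*} [Fintype ι] (v : ι → ℂ) : ℝ := ⨆ i, ‖v i‖

noncomputable def csign (w : ℂ) : ℂ := if w = 0 then 0 else w / (‖w‖ : ℂ)

noncomputable def shrink {ι : Type*} [Fintype ι] (z : ι → ℂ) (ν : ℝ) : ι → ℂ :=
  fun i => ((max (‖z i‖ - ν) 0 : ℝ) : ℂ) * csign (z i)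

noncomputable def reInner {ι : Type*} [Fintype ι] (y v : ι → ℂ) : ℝ :=
  (∑ i, (starRingEnd ℂ) (y i) * v i).re

noncomputable def projBall {ι : Type*} [Fintype ι] (t : ℝ) (v : ι → ℂ) : ι → ℂ :=
  if l2 v ≤ t then v else (t / l2 v) • v

noncomputable def projBox {ι : Type*} [Fintype ι] (v : ι → ℂ) : ι → ℂ :=
  fun i => if ‖v i‖ ≤ 1 then v i else v i / (‖v i‖ : ℂ)

noncomputable def lmax {m n : ℕ} (A : Matrix (Fin m) (Fin n) ℂ) : ℝ :=
  ⨆ i, (Matrix.isHermitian_conjTranspose_mul_self A).eigenvalues i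

lemma abs_sq_sub' (a b : ℂ) :
    (‖a - b‖)^2 = (‖a‖)^2 - 2 * ((starRingEnd ℂ) a * b).re + (‖b‖)^2 := by
  simp only [Complex.sq_norm, Complex.normSq_apply, Complex.sub_re, Complex.sub_im,
    Complex.mul_re, Complex.mul_im, Complex.conj_re, Complex.conj_im]
  ring

lemma l2sq_sub' {ι : Type*} [Fintype ι] (u v : ι → ℂ) :
    l2sq (u - v) = l2sq u - 2 * reInner u v + l2sq v := by
  unfold l2sq reInner
  rw [Complex.re_sum, Finset.mul_sum]
  simp only [Pi.sub_apply, abs_sq_sub']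
  rw [Finset.sum_add_distrib, Finset.sum_sub_distrib]

lemma l2sq_nonneg' {ι : Type*} [Fintype ι] (v : ι → ℂ) : 0 ≤ l2sq v :=
  Finset.sum_nonneg fun _ _ => sq_nonneg _

lemma reInner_adjoint' {m n : ℕ} (A : Matrix (Fin m) (Fin n) ℂ) (y : Fin m → ℂ) (h : Fin n → ℂ) :
    reInner (Aᴴ.mulVec y) h = reInner y (A.mulVec h) := by
  unfold reInner
  congr 1
  simp only [Matrix.mulVec, dotProduct, Matrix.conjTranspose_apply, map_sum, _root_.map_mul,
    Complex.conj_conj, Finset.sum_mul, Finset.mul_sum]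
  rw [Finset.sum_comm]
  refine Finset.sum_congr rfl fun j _ => Finset.sum_congr rfl fun i _ => ?_
  simp only [RCLike.star_def, Complex.conj_conj, _root_.map_mul]
  ring

lemma reInner_single' {n : ℕ} (w : Fin n → ℂ) (i : Fin n) (z : ℂ) :
    reInner w (Pi.single i z) = ((starRingEnd ℂ) (w i) * z).re := by
  unfold reInner
  congr 1
  rw [Finset.sum_eq_single i]
  · simp
  · intro j _ hj; simp [Pi.single_eq_of_ne hj]
  · simp

lemma reInner_smul_real' {ι : Type*} [Fintype ι] (c : ℝ) (y v : ι → ℂ) :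
    reInner (c • y) v = c * reInner y v := by
  unfold reInner
  rw [Complex.re_sum, Complex.re_sum, Finset.mul_sum]
  refine Finset.sum_congr rfl fun i _ => ?_
  simp only [Pi.smul_apply, Complex.real_smul, _root_.map_mul, Complex.conj_ofReal]
  rw [mul_assoc, Complex.re_ofReal_mul]

lemma l1_add_single' {n : ℕ} (xt : Fin n → ℂ) (i : Fin n) (z : ℂ) :
    l1 (xt + Pi.single i z) = l1 xt - ‖xt i‖ + ‖xt i + z‖ := by
  unfold l1
  rw [← Finset.sum_erase_add _ _ (Finset.mem_univ i),
      ← Finset.sum_erase_add Finset.univ (fun j => ‖xt j‖) (Finset.mem_univ i)]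
  have hs : ∑ j ∈ Finset.univ.erase i, ‖((xt + Pi.single i z) : Fin n → ℂ) j‖
      = ∑ j ∈ Finset.univ.erase i, ‖xt j‖ :=
    Finset.sum_congr rfl fun j hj => by
      simp [Pi.single_eq_of_ne (Finset.ne_of_mem_erase hj)]
  rw [hs]
  simp only [Pi.add_apply, Pi.single_eq_same]
  ring

lemma l2sq_mulVec_single' {m n : ℕ} (A : Matrix (Fin m) (Fin n) ℂ) (i : Fin n) (z : ℂ) :
    l2sq (A.mulVec (Pi.single i z)) = (‖z‖)^2 * (∑ k, (‖A k i‖)^2) := by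
  unfold l2sq
  rw [Finset.mul_sum]
  refine Finset.sum_congr rfl fun k _ => ?_
  have : A.mulVec (Pi.single i z) k = A k i * z := by
    simp [Matrix.mulVec, dotProduct]
    rw [Finset.sum_eq_single i]
    · simp
    · intro j _ hj; simp [Pi.single_eq_of_ne hj]
    · simp
  rw [this, norm_mul]
  ring

lemma csign_abs' (z : ℂ) (hz : z ≠ 0) : ‖csign z‖ = 1 := by
  unfold csign
  rw [if_neg hz, norm_div, Complex.norm_real, Real.norm_eq_abs, abs_of_nonneg (norm_nonneg z),
    div_self ((norm_ne_zero_iff.mpr hz))]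

lemma csign_mul_abs' (z : ℂ) : csign z * (‖z‖ : ℂ) = z := by
  unfold csign
  by_cases hz : z = 0
  · simp [hz]
  · rw [if_neg hz, div_mul_cancel₀]
    exact_mod_cast (norm_ne_zero_iff.mpr hz)

lemma conj_mul_csign_re' (z : ℂ) (hz : z ≠ 0) :
    ((starRingEnd ℂ) z * csign z).re = ‖z‖ := by
  unfold csign
  rw [if_neg hz, mul_div_assoc', mul_comm, Complex.mul_conj]
  rw [Complex.div_ofReal_re, Complex.ofReal_re, Complex.normSq_eq_norm_sq, sq, mul_div_assoc,
    div_self ((norm_ne_zero_iff.mpr hz)), mul_one]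

lemma obj_shift' {m n : ℕ} (A : Matrix (Fin m) (Fin n) ℂ) (μ : ℝ) (hμ : 0 < μ)
    (rt : Fin m → ℂ) (xt h : Fin n → ℂ) :
    l1 (xt + h) + (1/(2*μ)) * l2sq (rt - A.mulVec h)
      = l1 (xt + h) + (1/(2*μ)) * l2sq rt - reInner (Aᴴ.mulVec ((1/μ) • rt)) h
        + (1/(2*μ)) * l2sq (A.mulVec h) := by
  rw [l2sq_sub', Matrix.mulVec_smul, reInner_smul_real', reInner_adjoint']
  field_simp
  ring


/-- Optimality conditions (A.1) for problem (2.9): a feasible pair (r̃, x̃) is a solution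
iff, with ỹ = r̃/μ, the vector A*ỹ lies in the subdifferential of ‖·‖₁ at x̃. -/
theorem qp_optimality_conditions {m n : ℕ} (A : Matrix (Fin m) (Fin n) ℂ)
    (b : Fin m → ℂ) (μ : ℝ) (hμ : 0 < μ)
    (rt : Fin m → ℂ) (xt : Fin n → ℂ) (hfeas : A.mulVec xt + rt = b) :
    let w : Fin n → ℂ := Aᴴ.mulVec ((1/μ) • rt)
    ((∀ (x : Fin n → ℂ) (r : Fin m → ℂ), A.mulVec x + r = b →
        l1 xt + (1/(2*μ)) * l2sq rt ≤ l1 x + (1/(2*μ)) * l2sq r) ↔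
      (linf w ≤ 1 ∧ ∀ i : Fin n, ((starRingEnd ℂ) (w i) * xt i).re = ‖xt i‖)) := by
  intro w
  have hC : ∀ i : Fin n, (0:ℝ) ≤ ∑ k, (‖A k i‖)^2 :=
    fun i => Finset.sum_nonneg fun _ _ => sq_nonneg _
  have OS : ∀ h : Fin n → ℂ,
      l1 (xt + h) + (1/(2*μ)) * l2sq (rt - A.mulVec h)
        = l1 (xt + h) + (1/(2*μ)) * l2sq rt - reInner w h
          + (1/(2*μ)) * l2sq (A.mulVec h) :=
    fun h => obj_shift' A μ hμ rt xt h
  constructor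
  · intro hopt
    have key : ∀ (i : Fin n) (z : ℂ), ((starRingEnd ℂ) (w i) * z).re
        ≤ ‖xt i + z‖ - ‖xt i‖
          + (1/(2*μ)) * ((‖z‖)^2 * ∑ k, (‖A k i‖)^2) := by
      intro i z
      have hfeas2 : A.mulVec (xt + Pi.single i z) + (rt - A.mulVec (Pi.single i z)) = b := by
        rw [Matrix.mulVec_add, ← hfeas]; abel
      have h1 := hopt _ _ hfeas2
      rw [OS (Pi.single i z), l1_add_single', reInner_single', l2sq_mulVec_single'] at h1
      linarith
    have habs : ∀ i, ‖w i‖ ≤ 1 := by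
      intro i
      by_cases hw : w i = 0
      · simp [hw]
      · set C := ∑ k, (‖A k i‖)^2 with hCdef
        have hK : (0:ℝ) ≤ (1/(2*μ)) * C := mul_nonneg (by positivity) (hC i)
        refine le_of_forall_pos_le_add fun ε hε => ?_
        set t : ℝ := ε / ((1/(2*μ))*C + 1) with ht
        have htpos : 0 < t := div_pos hε (by linarith)
        have hk := key i ((t:ℝ) * csign (w i))
        have h2 : ((starRingEnd ℂ) (w i) * ((t:ℝ) * csign (w i))).re
            = t * ‖w i‖ := by
          rw [show (starRingEnd ℂ) (w i) * ((t:ℝ) * csign (w i))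
              = (t:ℝ) * ((starRingEnd ℂ) (w i) * csign (w i)) by push_cast; ring,
            Complex.re_ofReal_mul, conj_mul_csign_re' _ hw]
        have h3 : ‖(t:ℝ) * csign (w i)‖ = t := by
          rw [norm_mul, Complex.norm_real, Real.norm_eq_abs, csign_abs' _ hw, mul_one, abs_of_pos htpos]
        have h4 : ‖xt i + (t:ℝ) * csign (w i)‖
            ≤ ‖xt i‖ + t := by
          calc ‖xt i + (t:ℝ) * csign (w i)‖
              ≤ ‖xt i‖ + ‖(t:ℝ) * csign (w i)‖ := norm_add_le _ _
            _ = ‖xt i‖ + t := by rw [h3]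
        rw [h2, h3] at hk
        have h5 : t * ‖w i‖ ≤ t * (1 + (1/(2*μ))*C*t) := by nlinarith [hk, h4]
        have h6 : ‖w i‖ ≤ 1 + (1/(2*μ))*C*t := le_of_mul_le_mul_left h5 htpos
        have h7 : (1/(2*μ))*C*t ≤ ε := by
          rw [ht, mul_div_assoc', div_le_iff₀ (by linarith : (0:ℝ) < (1/(2*μ))*C + 1)]
          nlinarith [hε.le, hK]
        linarith
    refine ⟨Real.iSup_le habs zero_le_one, fun i => ?_⟩
    by_cases hx : xt i = 0
    · simp [hx]
    · have ha : 0 < ‖xt i‖ := norm_pos_iff.mpr hx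
      set a := ‖xt i‖ with hadef
      have hle : ((starRingEnd ℂ) (w i) * xt i).re ≤ a := by
        calc ((starRingEnd ℂ) (w i) * xt i).re
            ≤ ‖(starRingEnd ℂ) (w i) * xt i‖ := Complex.re_le_norm _
          _ = ‖w i‖ * a := by rw [norm_mul, Complex.norm_conj]
          _ ≤ 1 * a := mul_le_mul_of_nonneg_right (habs i) ha.le
          _ = a := one_mul a
      set S := ((starRingEnd ℂ) (w i) * csign (xt i)).re with hSdef
      have hSa : S * a = ((starRingEnd ℂ) (w i) * xt i).re := by
        rw [hSdef, mul_comm, ← Complex.re_ofReal_mul,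
          show (a:ℂ) * ((starRingEnd ℂ) (w i) * csign (xt i))
            = (starRingEnd ℂ) (w i) * (csign (xt i) * (a:ℂ)) by ring,
          hadef, csign_mul_abs']
      have hSge : 1 ≤ S := by
        set C := ∑ k, (‖A k i‖)^2 with hCdef
        have hK : (0:ℝ) ≤ (1/(2*μ)) * C := mul_nonneg (by positivity) (hC i)
        refine le_of_forall_pos_le_add fun ε hε => ?_
        set t : ℝ := min a (ε / ((1/(2*μ))*C + 1)) with ht
        have htpos : 0 < t := lt_min ha (div_pos hε (by linarith))
        have hta : t ≤ a := min_le_left _ _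
        have hk := key i (((-t:ℝ):ℂ) * csign (xt i))
        have h2 : ((starRingEnd ℂ) (w i) * (((-t:ℝ):ℂ) * csign (xt i))).re = -t * S := by
          rw [show (starRingEnd ℂ) (w i) * (((-t:ℝ):ℂ) * csign (xt i))
              = ((-t:ℝ):ℂ) * ((starRingEnd ℂ) (w i) * csign (xt i)) by ring,
            Complex.re_ofReal_mul, hSdef]
        have h3 : ‖((-t:ℝ):ℂ) * csign (xt i)‖ = t := by
          rw [norm_mul, Complex.norm_real, Real.norm_eq_abs, csign_abs' _ hx, mul_one, abs_of_neg (by linarith), neg_neg]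
        have h4 : xt i + ((-t:ℝ):ℂ) * csign (xt i) = csign (xt i) * ((a - t : ℝ):ℂ) := by
          have hxcs : csign (xt i) * (a:ℂ) = xt i := by rw [hadef]; exact csign_mul_abs' _
          push_cast
          linear_combination -hxcs
        have h5 : ‖xt i + ((-t:ℝ):ℂ) * csign (xt i)‖ = a - t := by
          rw [h4, norm_mul, csign_abs' _ hx, one_mul, Complex.norm_real, Real.norm_eq_abs,
            abs_of_nonneg (by linarith)]
        rw [h2, h3, h5] at hk
        have h6 : t * (1 - (1/(2*μ))*C*t) ≤ t * S := by nlinarith [hk]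
        have h7 : 1 - (1/(2*μ))*C*t ≤ S := le_of_mul_le_mul_left h6 htpos
        have h8 : (1/(2*μ))*C*t ≤ ε := by
          have hle2 : t ≤ ε / ((1/(2*μ))*C + 1) := min_le_right _ _
          have := mul_le_mul_of_nonneg_left hle2 hK
          rw [mul_div_assoc'] at this
          have h9 : (1/(2*μ))*C * ε / ((1/(2*μ))*C + 1) ≤ ε := by
            rw [div_le_iff₀ (by linarith : (0:ℝ) < (1/(2*μ))*C + 1)]
            nlinarith [hε.le, hK]
          linarith
        linarith
      nlinarith [mul_le_mul_of_nonneg_right hSge ha.le]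
  · rintro ⟨hlinf, heq⟩ x r hfr
    have habs : ∀ i, ‖w i‖ ≤ 1 := by
      intro i
      refine le_trans ?_ hlinf
      unfold linf
      exact le_ciSup (f := fun j => ‖w j‖) (Set.Finite.bddAbove (Set.finite_range _)) i
    have hr : r = rt - A.mulVec (x - xt) := by
      have h2 : A.mulVec x + r = A.mulVec xt + rt := by rw [hfr, hfeas]
      rw [Matrix.mulVec_sub]
      funext k
      have hk := congrFun h2 k
      simp only [Pi.add_apply, Pi.sub_apply] at hk ⊢
      linear_combination hk
    have hx : xt + (x - xt) = x := by abel
    have hptw : reInner w (x - xt) ≤ l1 x - l1 xt := by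
      unfold reInner l1
      rw [Complex.re_sum, ← Finset.sum_sub_distrib]
      refine Finset.sum_le_sum fun i _ => ?_
      have h1 : ((starRingEnd ℂ) (w i) * ((x - xt) i)).re
          = ((starRingEnd ℂ) (w i) * x i).re - ‖xt i‖ := by
        rw [Pi.sub_apply, mul_sub, Complex.sub_re, heq i]
      have h2 : ((starRingEnd ℂ) (w i) * x i).re ≤ ‖x i‖ := by
        calc ((starRingEnd ℂ) (w i) * x i).re
            ≤ ‖(starRingEnd ℂ) (w i) * x i‖ := Complex.re_le_norm _
          _ = ‖w i‖ * ‖x i‖ := by rw [norm_mul, Complex.norm_conj]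
          _ ≤ 1 * ‖x i‖ := mul_le_mul_of_nonneg_right (habs i) (norm_nonneg _)
          _ = ‖x i‖ := one_mul _
      rw [h1]; linarith
    have hOS := OS (x - xt)
    rw [hx, ← hr] at hOS
    have hnn : (0:ℝ) ≤ (1/(2*μ)) * l2sq (A.mulVec (x - xt)) :=
      mul_nonneg (by positivity) (l2sq_nonneg' _)
    linarith
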